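/- Let X and Y be topological spaces, (Z, λ) an equiconnected space, (I, ≤) a well-ordered set, (f_i)_{i∈I} a family of Baire-one maps f_i : Y → Z, and (φ_i)_{i∈I} a locally finite partition of unity on X. Then the mapping f : X × Y → Z given by f(x,y) = Σ^λ_{i∈I} φ_i(x) f_i(y) is Baire-one. -/

import Mathlib

open Set Function Filter Topology

universe u

/-- An *equiconnecting* map on `Z`: a map `λ : Z × Z × [0,1] → Z`, continuous on
`Z × Z × [0,1]`, with `λ(x,y,0) = x`, `λ(x,y,1) = y` and `λ(x,x,t) = x`. -/
structure IsEquiconnecting {Z : Type*} [TopologicalSpace Z] (lam : Z → Z → ℝ → Z) : Prop where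
  continuousOn : ContinuousOn (fun p : Z × Z × ℝ => lam p.1 p.2.1 p.2.2)
    (Set.univ ×ˢ Set.univ ×ˢ Set.Icc (0 : ℝ) 1)
  map_zero : ∀ x y : Z, lam x y 0 = x
  map_one : ∀ x y : Z, lam x y 1 = y
  map_diag : ∀ x : Z, ∀ t ∈ Set.Icc (0 : ℝ) 1, lam x x t = x

/-- `lambdaIter lam n` is the map `λ_{n+1} : Z^{n+1} × S_{n+1} → Z` from the paper,
defined recursively. -/
noncomputable def lambdaIter {Z : Type*} (lam : Z → Z → ℝ → Z) :
    (n : ℕ) → (Fin (n + 1) → Z) → (Fin (n + 1) → ℝ) → Z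
  | 0, x, _ => x 0
  | n + 1, x, a =>
      if 0 < a 0 + a 1 then
        lambdaIter lam n
          (Fin.cons (lam (x 0) (x 1) (a 1 / (a 0 + a 1))) fun i => x i.succ.succ)
          (Fin.cons (a 0 + a 1) fun i => a i.succ.succ)
      else
        lambdaIter lam n (fun i => x i.succ) fun i => a i.succ

/-- `lambdaIterSet lam A n` is the set `λ^n(A)`:  `λ^0(A) = A` and
`λ^{n+1}(A) = λ(λ^n(A) × A × [0,1])`. -/
def lambdaIterSet {Z : Type*} (lam : Z → Z → ℝ → Z) (A : Set Z) : ℕ → Set Z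
  | 0 => A
  | n + 1 => (fun p : Z × Z × ℝ => lam p.1 p.2.1 p.2.2) ''
      (lambdaIterSet lam A n ×ˢ A ×ˢ Set.Icc (0 : ℝ) 1)

/-- `λ^∞(A) = ⋃_{n ≥ 1} λ^n(A)`. -/
def lambdaInftySet {Z : Type*} (lam : Z → Z → ℝ → Z) (A : Set Z) : Set Z :=
  ⋃ n : ℕ, lambdaIterSet lam A (n + 1)

/-- An equiconnected space `(Z, λ)` is locally convex if every point has arbitrarily small
neighborhoods `V` with `λ^∞(V)` inside a given neighborhood. -/
def IsLocallyConvexEquiconnected {Z : Type*} [TopologicalSpace Z] (lam : Z → Z → ℝ → Z) :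
    Prop :=
  ∀ z : Z, ∀ U ∈ nhds z, ∃ V ∈ nhds z, lambdaInftySet lam V ⊆ U

/-- A map is Baire-one if it is the pointwise limit of a sequence of continuous maps. -/
def BaireOne {Y Z : Type*} [TopologicalSpace Y] [TopologicalSpace Z] (g : Y → Z) : Prop :=
  ∃ h : ℕ → Y → Z, (∀ n, Continuous (h n)) ∧
    ∀ y, Filter.Tendsto (fun n => h n y) Filter.atTop (nhds (g y))

/-- A locally finite partition of unity on `X`: continuous `[0,1]`-valued functions whose
supports (closures of the sets where they are nonzero) form a locally finite family and whose
pointwise sum is `1`. -/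
def IsLocFinPartitionOfUnity {I X : Type*} [TopologicalSpace X] (φ : I → X → ℝ) : Prop :=
  (∀ i, Continuous (φ i)) ∧ (∀ i x, φ i x ∈ Set.Icc (0 : ℝ) 1) ∧
    (LocallyFinite fun i => closure (Function.support (φ i))) ∧ ∀ x, ∑ᶠ i, φ i x = 1

/-- A strong PP-space: for every dense `D ⊆ X` there are a sequence of locally finite
partitions of unity and families of points of `D` such that points attached to the supports
containing `x` converge to `x` uniformly in the index, in the sense of condition (3). -/
def IsStrongPPSpace (X : Type*) [TopologicalSpace X] : Prop :=
  ∀ D : Set X, Dense D →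
    ∃ (I : ℕ → Type u) (φ : ∀ n, I n → X → ℝ) (p : ∀ n, I n → X),
      (∀ n, IsLocFinPartitionOfUnity (φ n)) ∧ (∀ n i, p n i ∈ D) ∧
      ∀ x : X, ∀ U ∈ nhds x, ∃ n₀ : ℕ, ∀ n ≥ n₀, ∀ i : I n,
        x ∈ closure (Function.support (φ n i)) → p n i ∈ U

/-- A zero set: the preimage of `{0}` under a continuous function `X → [0,1]`. -/
def IsZeroSet {X : Type*} [TopologicalSpace X] (A : Set X) : Prop :=
  ∃ f : X → ℝ, Continuous f ∧ (∀ x, f x ∈ Set.Icc (0 : ℝ) 1) ∧ A = f ⁻¹' {0}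

/-- A cozero set: the preimage of `(0,1]` under a continuous function `X → [0,1]`. -/
def IsCozeroSet {X : Type*} [TopologicalSpace X] (A : Set X) : Prop :=
  ∃ f : X → ℝ, Continuous f ∧ (∀ x, f x ∈ Set.Icc (0 : ℝ) 1) ∧ A = f ⁻¹' Set.Ioc (0 : ℝ) 1

/-- A functionally ambiguous set: simultaneously a countable union of zero sets and a
countable intersection of cozero sets. -/
def IsFunctionallyAmbiguous {X : Type*} [TopologicalSpace X] (A : Set X) : Prop :=
  (∃ F : ℕ → Set X, (∀ n, IsZeroSet (F n)) ∧ A = ⋃ n, F n) ∧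
    ∃ B : ℕ → Set X, (∀ n, IsCozeroSet (B n)) ∧ A = ⋂ n, B n

/-- A discrete family of sets: every point has a neighborhood meeting at most one member. -/
def IsDiscreteFamily {I X : Type*} [TopologicalSpace X] (A : I → Set X) : Prop :=
  ∀ x : X, ∃ U ∈ nhds x, {i : I | (U ∩ A i).Nonempty}.Subsingleton

/-- Weakly collectionwise normal: every discrete family of zero sets can be separated by a
discrete family of cozero sets. -/
def WeaklyCollectionwiseNormal (X : Type*) [TopologicalSpace X] : Prop :=
  ∀ (S : Type u) (F : S → Set X), (∀ s, IsZeroSet (F s)) → IsDiscreteFamily F →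
    ∃ U : S → Set X, (∀ s, IsCozeroSet (U s)) ∧ IsDiscreteFamily U ∧ ∀ s, F s ⊆ U s

/-- A contracting structure on `Z`: a continuous `γ : Z × [0,1] → Z` with `γ(z,0) = z` and
`γ(z,1) = z₀`. -/
structure IsContracting {Z : Type*} [TopologicalSpace Z] (γ : Z → ℝ → Z) (z₀ : Z) :
    Prop where
  continuousOn : ContinuousOn (fun p : Z × ℝ => γ p.1 p.2) (Set.univ ×ˢ Set.Icc (0 : ℝ) 1)
  map_zero : ∀ z : Z, γ z 0 = z
  map_one : ∀ z : Z, γ z 1 = z₀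


section Aux

lemma exists_strictMono_enum {I : Type*} [LinearOrder I] {s : Set I} (hfin : s.Finite)
    (hne : s.Nonempty) : ∃ (N : ℕ) (e : Fin (N+1) → I), StrictMono e ∧ (∀ m, e m ∈ s) ∧
      ∀ i ∈ s, ∃ m, e m = i := by
  classical
  set t := hfin.toFinset with ht
  have htne : t.Nonempty := by
    obtain ⟨i, hi⟩ := hne
    exact ⟨i, (Set.Finite.mem_toFinset hfin).2 hi⟩
  have htcard : t.card ≠ 0 := by
    simpa [Finset.card_eq_zero] using htne.ne_empty
  obtain ⟨N, hN⟩ : ∃ N, t.card = N + 1 := ⟨t.card - 1, by omega⟩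
  refine ⟨N, fun m => (t.orderIsoOfFin hN m : I), ?_, ?_, ?_⟩
  · intro m m' hmm
    exact Subtype.coe_lt_coe.2 ((t.orderIsoOfFin hN).strictMono hmm)
  · intro m
    have hmem := (t.orderIsoOfFin hN m).2
    exact (Set.Finite.mem_toFinset hfin).1 hmem
  · intro i hi
    obtain ⟨m, hm⟩ := (t.orderIsoOfFin hN).surjective
      ⟨i, (Set.Finite.mem_toFinset hfin).2 hi⟩
    refine ⟨m, ?_⟩
    show ((t.orderIsoOfFin hN) m : I) = i
    rw [hm]

variable {Z : Type*} [TopologicalSpace Z] (lam : Z → Z → ℝ → Z)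

theorem lambdaIter_zero_left (hone : ∀ x y : Z, lam x y 1 = y)
    (n : ℕ) (x : Fin (n + 2) → Z) (a : Fin (n + 2) → ℝ) (h0 : a 0 = 0) :
    lambdaIter lam (n + 1) x a = lambdaIter lam n (fun i => x i.succ) (fun i => a i.succ) := by
  rw [lambdaIter]
  rcases lt_or_ge 0 (a 0 + a 1) with hpos | hneg
  · rw [if_pos hpos]
    have h1 : a 1 ≠ 0 := by intro h; rw [h0, h] at hpos; simp at hpos
    have : lam (x 0) (x 1) (a 1 / (a 0 + a 1)) = x 1 := by
      rw [h0, zero_add, div_self h1, hone]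
    rw [this]
    congr 1
    · funext i
      refine Fin.cases ?_ (fun j => ?_) i <;> simp
    · funext i
      refine Fin.cases ?_ (fun j => ?_) i <;> simp [h0]
  · rw [if_neg (not_lt.2 hneg)]

theorem lambdaIter_removeNth (hzero : ∀ x y : Z, lam x y 0 = x)
    (hone : ∀ x y : Z, lam x y 1 = y) :
    ∀ (n : ℕ) (x : Fin (n + 2) → Z) (a : Fin (n + 2) → ℝ), (∀ i, 0 ≤ a i) →
      (∑ i, a i = 1) → ∀ p : Fin (n + 2), a p = 0 →
      lambdaIter lam (n + 1) x a
        = lambdaIter lam n (x ∘ p.succAbove) (a ∘ p.succAbove) := by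
  intro n
  induction n with
  | zero =>
    intro x a hpos hsum p
    revert p
    refine Fin.cases ?_ (fun p1 => Fin.cases ?_ (fun p0 => p0.elim0) p1) <;> intro hp
    · rw [lambdaIter_zero_left lam hone 0 x a hp]
      simp [lambdaIter, Fin.succAbove, comp_def]
    · -- p = 1, a 1 = 0
      have hp1 : a 1 = 0 := hp
      rcases lt_or_ge 0 (a 0 + a 1) with hlt | hge
      · simp only [lambdaIter, if_pos hlt]
        simp only [Fin.cons_zero]
        rw [hp1, zero_div, hzero]
        simp [Fin.succAbove, comp_def]
      · exfalso
        have h0 : a 0 = 0 := le_antisymm (by linarith [hpos 1, hp1]) (hpos 0)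
        rw [Fin.sum_univ_two, h0, hp1] at hsum
        norm_num at hsum
  | succ n IH =>
    intro x a hpos hsum p
    revert p
    have hsum3 : a 0 + a 1 + ∑ i : Fin (n + 1), a i.succ.succ = 1 := by
      rw [Fin.sum_univ_succ, Fin.sum_univ_succ, Fin.succ_zero_eq_one] at hsum
      linarith [hsum]
    refine Fin.cases ?_ (fun p1 => Fin.cases ?_ (fun q => ?_) p1) <;> intro hp
    · -- p = 0
      rw [lambdaIter_zero_left lam hone _ x a hp, Fin.succAbove_zero]
      rfl
    · -- p = 1, a 1 = 0
      have hp1 : a 1 = 0 := hp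
      have hx1 : x ∘ (Fin.succ (0 : Fin (n + 2))).succAbove =
          Fin.cons (x 0) (fun i : Fin (n + 1) => x i.succ.succ) := by
        funext i
        refine Fin.cases ?_ (fun j => ?_) i
        · simp [Fin.succAbove]
        · rw [comp_apply, Fin.succ_succAbove_succ, Fin.succAbove_zero, Fin.cons_succ]
      have ha1 : a ∘ (Fin.succ (0 : Fin (n + 2))).succAbove =
          Fin.cons (a 0) (fun i : Fin (n + 1) => a i.succ.succ) := by
        funext i
        refine Fin.cases ?_ (fun j => ?_) i
        · simp [Fin.succAbove]
        · rw [comp_apply, Fin.succ_succAbove_succ, Fin.succAbove_zero, Fin.cons_succ]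
      rcases lt_or_ge 0 (a 0 + a 1) with hlt | hge
      · rw [lambdaIter, if_pos hlt, hx1, ha1]
        have : lam (x 0) (x 1) (a 1 / (a 0 + a 1)) = x 0 := by
          rw [hp1, zero_div, hzero]
        rw [this, hp1, add_zero]
      · have h1 : a 0 = 0 := le_antisymm (by linarith [hpos 1]) (hpos 0)
        rw [lambdaIter, if_neg (not_lt.2 hge), hx1, ha1]
        rw [lambdaIter_zero_left lam hone n (fun i => x i.succ) (fun i => a i.succ)
          (by simpa using hp1)]
        rw [lambdaIter_zero_left lam hone n _ _ (by simpa using h1)]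
        simp [Fin.cons_succ]
    · -- p = q.succ.succ
      have hq : a q.succ.succ = 0 := hp
      have hsA0 : (q.succ.succ : Fin (n + 3)).succAbove 0 = 0 := by
        apply Fin.succAbove_of_castSucc_lt
        rw [Fin.lt_def]; simp only [Fin.coe_castSucc, Fin.val_succ, Fin.val_zero]; omega
      have hsA1 : (q.succ.succ : Fin (n + 3)).succAbove 1 = 1 := by
        apply Fin.succAbove_of_castSucc_lt
        simp [Fin.lt_def]
      have hxt : ∀ j : Fin n, (q.succ.succ : Fin (n + 3)).succAbove j.succ.succ
          = (q.succAbove j).succ.succ := by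
        intro j
        rw [Fin.succ_succAbove_succ, Fin.succ_succAbove_succ]
      rcases lt_or_ge 0 (a 0 + a 1) with hlt | hge
      · rw [lambdaIter, if_pos hlt]
        have hzero' : (Fin.cons (a 0 + a 1)
            (fun i : Fin (n+1) => a i.succ.succ) : Fin (n+2) → ℝ) q.succ = 0 := by
          rw [Fin.cons_succ]; exact hq
        rw [IH _ _ ?_ ?_ q.succ hzero']
        · rw [lambdaIter, if_pos (show (0:ℝ) < (a ∘ (q.succ.succ : Fin (n+3)).succAbove) 0
              + (a ∘ (q.succ.succ : Fin (n+3)).succAbove) 1 by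
            simp only [comp_apply, hsA0, hsA1]; exact hlt)]
          congr 1
          · funext i
            refine Fin.cases ?_ (fun j => ?_) i
            · simp only [comp_apply, Fin.succ_succAbove_zero, Fin.cons_zero, hsA0, hsA1,
                Fin.cons_succ]
            · simp only [comp_apply, Fin.succ_succAbove_succ, Fin.cons_succ, hxt]
          · funext i
            refine Fin.cases ?_ (fun j => ?_) i
            · simp only [comp_apply, Fin.succ_succAbove_zero, Fin.cons_zero, hsA0, hsA1,
                Fin.cons_succ]
            · simp only [comp_apply, Fin.succ_succAbove_succ, Fin.cons_succ, hxt]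
        · intro i
          refine Fin.cases ?_ (fun j => ?_) i
          · rw [Fin.cons_zero]; positivity
          · rw [Fin.cons_succ]; exact hpos _
        · rw [Fin.sum_cons]; linarith [hsum3]
      · rw [lambdaIter, if_neg (not_lt.2 hge)]
        have hzero' : (fun i : Fin (n+2) => a i.succ) q.succ = 0 := hq
        rw [IH _ _ (fun i => hpos _) ?_ q.succ hzero']
        · rw [lambdaIter, if_neg (show ¬ (0:ℝ) < (a ∘ (q.succ.succ : Fin (n+3)).succAbove) 0
              + (a ∘ (q.succ.succ : Fin (n+3)).succAbove) 1 by
            simp only [comp_apply, hsA0, hsA1]; exact not_lt.2 hge)]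
          congr 1
          · funext i
            simp only [comp_apply, Fin.succ_succAbove_succ]
          · funext i
            simp only [comp_apply, Fin.succ_succAbove_succ]
        · have h0 : a 0 = 0 := le_antisymm (by linarith [hpos 0, hpos 1]) (hpos 0)
          rw [Fin.sum_univ_succ] at hsum
          linarith

theorem continuousOn_lambdaIter
    (hc : ContinuousOn (fun p : Z × Z × ℝ => lam p.1 p.2.1 p.2.2)
      (univ ×ˢ univ ×ˢ Icc (0:ℝ) 1))
    (hone : ∀ x y : Z, lam x y 1 = y) : ∀ n : ℕ,
    ContinuousOn (fun p : (Fin (n+1) → Z) × (Fin (n+1) → ℝ) => lambdaIter lam n p.1 p.2)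
      (univ ×ˢ stdSimplex ℝ (Fin (n+1))) := by
  intro n
  induction n with
  | zero =>
    have : Continuous fun p : (Fin 1 → Z) × (Fin 1 → ℝ) => p.1 0 :=
      (continuous_apply 0).comp continuous_fst
    exact fun p _ => (this.continuousAt).continuousWithinAt
  | succ n IH =>
    set D := univ ×ˢ stdSimplex ℝ (Fin (n+2)) with hD
    set T : ((Fin (n+2) → Z) × (Fin (n+2) → ℝ)) × ℝ → Z := fun q =>
      lambdaIter lam n
        (Fin.cons (lam (q.1.1 0) (q.1.1 1) q.2) fun i => q.1.1 i.succ.succ)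
        (Fin.cons (q.1.2 0 + q.1.2 1) fun i => q.1.2 i.succ.succ) with hTdef
    have hsum2 : ∀ a : Fin (n+2) → ℝ,
        (a 0 + a 1) + ∑ i : Fin n, a i.succ.succ = ∑ i, a i := by
      intro a
      rw [Fin.sum_univ_succ a, Fin.sum_univ_succ fun i : Fin (n+1) => a i.succ,
        Fin.succ_zero_eq_one]
      ring
    have hT : ContinuousOn T (D ×ˢ Icc (0:ℝ) 1) := by
      have hinner : ContinuousOn (fun q : ((Fin (n+2) → Z) × (Fin (n+2) → ℝ)) × ℝ =>
          ((Fin.cons (lam (q.1.1 0) (q.1.1 1) q.2) fun i => q.1.1 i.succ.succ : Fin (n+1) → Z),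
           (Fin.cons (q.1.2 0 + q.1.2 1) fun i => q.1.2 i.succ.succ : Fin (n+1) → ℝ)))
          (D ×ˢ Icc (0:ℝ) 1) := by
        apply ContinuousOn.prodMk
        · apply continuousOn_pi.2
          intro i
          refine Fin.cases ?_ (fun j => ?_) i
          · simp only [Fin.cons_zero]
            have hmapc : Continuous (fun y : ((Fin (n+2) → Z) × (Fin (n+2) → ℝ)) × ℝ =>
                ((y.1.1 0, y.1.1 1, y.2) : Z × Z × ℝ)) :=
              (((continuous_apply 0).comp (continuous_fst.comp continuous_fst)).prodMk
                (((continuous_apply 1).comp (continuous_fst.comp continuous_fst)).prodMk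
                  continuous_snd))
            exact hc.comp hmapc.continuousOn (fun q hq => ⟨trivial, trivial, hq.2⟩)
          · simp only [Fin.cons_succ]
            exact ((continuous_apply _).comp (continuous_fst.comp continuous_fst)).continuousOn
        · apply continuousOn_pi.2
          intro i
          refine Fin.cases ?_ (fun j => ?_) i
          · simp only [Fin.cons_zero]
            exact (((continuous_apply 0).comp (continuous_snd.comp continuous_fst)).add
              ((continuous_apply 1).comp (continuous_snd.comp continuous_fst))).continuousOn
          · simp only [Fin.cons_succ]
            exact ((continuous_apply _).comp (continuous_snd.comp continuous_fst)).continuousOn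
      apply IH.comp' hinner
      intro q hq
      refine ⟨trivial, ?_, ?_⟩
      · intro i
        induction i using Fin.cases with
        | zero =>
          simp only [Fin.cons_zero]
          have h0 := hq.1.2.1 0
          have h1 := hq.1.2.1 1
          positivity
        | succ j =>
          simp only [Fin.cons_succ]
          exact hq.1.2.1 _
      · simp only [Fin.sum_cons]
        rw [hsum2 q.1.2]
        exact hq.1.2.2
    intro p hp
    rcases lt_or_ge 0 (p.2 0 + p.2 1) with hpos | hneg
    · -- interior case
      set O : Set ((Fin (n+2) → Z) × (Fin (n+2) → ℝ)) := {q | 0 < q.2 0 + q.2 1} with hO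
      have hOopen : IsOpen O := by
        have : Continuous fun q : (Fin (n+2) → Z) × (Fin (n+2) → ℝ) => q.2 0 + q.2 1 :=
          ((continuous_apply 0).comp continuous_snd).add
            ((continuous_apply 1).comp continuous_snd)
        exact isOpen_lt continuous_const this
      have hOmem : O ∈ 𝓝 p := hOopen.mem_nhds hpos
      rw [← continuousWithinAt_inter hOmem]
      have hσ : ContinuousWithinAt
          (fun q : (Fin (n+2) → Z) × (Fin (n+2) → ℝ) => (q, q.2 1 / (q.2 0 + q.2 1)))
          (D ∩ O) p := by
        apply ContinuousWithinAt.prodMk continuousWithinAt_id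
        apply ContinuousWithinAt.div
        · exact ((continuous_apply 1).comp continuous_snd).continuousWithinAt
        · exact (((continuous_apply 0).comp continuous_snd).add
            ((continuous_apply 1).comp continuous_snd)).continuousWithinAt
        · exact ne_of_gt hpos
      have hmaps : MapsTo (fun q : (Fin (n+2) → Z) × (Fin (n+2) → ℝ) =>
          (q, q.2 1 / (q.2 0 + q.2 1))) (D ∩ O) (D ×ˢ Icc (0:ℝ) 1) := by
        rintro q ⟨hqD, hqO⟩
        have hqO' : (0:ℝ) < q.2 0 + q.2 1 := hqO
        refine ⟨hqD, ?_, ?_⟩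
        · exact div_nonneg (hqD.2.1 1) (le_of_lt hqO')
        · rw [div_le_one hqO']
          linarith [hqD.2.1 0]
      have hg : ContinuousWithinAt (fun q : (Fin (n+2) → Z) × (Fin (n+2) → ℝ) =>
          T (q, q.2 1 / (q.2 0 + q.2 1))) (D ∩ O) p :=
        ContinuousWithinAt.comp (g := T)
          (f := fun q : (Fin (n+2) → Z) × (Fin (n+2) → ℝ) => (q, q.2 1 / (q.2 0 + q.2 1)))
          (hT ((p, p.2 1 / (p.2 0 + p.2 1))) (hmaps ⟨hp, hpos⟩)) hσ hmaps
      apply hg.congr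
      · rintro q ⟨hqD, hqO⟩
        show lambdaIter lam (n+1) q.1 q.2 = _
        rw [lambdaIter, if_pos (show (0:ℝ) < q.2 0 + q.2 1 from hqO)]
      · show lambdaIter lam (n+1) p.1 p.2 = _
        rw [lambdaIter, if_pos hpos]
    · -- boundary case
      have h0 : p.2 0 = 0 := le_antisymm (by linarith [hp.2.1 1]) (hp.2.1 0)
      have h1 : p.2 1 = 0 := le_antisymm (by linarith [hp.2.1 0]) (hp.2.1 1)
      obtain ⟨m, rfl⟩ : ∃ m, n = m + 1 := by
        cases n with
        | zero =>
          exfalso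
          have := hp.2.2
          rw [Fin.sum_univ_two, h0, h1] at this
          norm_num at this
        | succ m => exact ⟨m, rfl⟩
      set Const : Z := lambdaIter lam m (fun i => p.1 i.succ.succ) (fun i => p.2 i.succ.succ)
        with hConst
      have hTconst : ∀ t : ℝ, T (p, t) = Const := by
        intro t
        show lambdaIter lam (m+1) _ _ = _
        rw [lambdaIter_zero_left lam hone m _ _ (by simp [h0, h1])]
        simp [Fin.cons_succ, hConst]
      have hval : ∀ q : (Fin (m+3) → Z) × (Fin (m+3) → ℝ), q ∈ D →
          lambdaIter lam (m+2) q.1 q.2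
            = T (q, if 0 < q.2 0 + q.2 1 then q.2 1 / (q.2 0 + q.2 1) else 0) := by
        intro q hq
        by_cases hqO : 0 < q.2 0 + q.2 1
        · rw [if_pos hqO]
          show _ = lambdaIter lam (m+1) _ _
          rw [lambdaIter, if_pos hqO]
        · rw [if_neg hqO]
          have hq0 : q.2 0 = 0 := le_antisymm (by push_neg at hqO; linarith [hq.2.1 1]) (hq.2.1 0)
          have hq1 : q.2 1 = 0 := le_antisymm (by push_neg at hqO; linarith [hq.2.1 0]) (hq.2.1 1)
          show _ = lambdaIter lam (m+1) _ _
          rw [lambdaIter, if_neg hqO]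
          rw [lambdaIter_zero_left lam hone m (fun i => q.1 i.succ) (fun i => q.2 i.succ)
            (by simpa using hq1)]
          rw [lambdaIter_zero_left lam hone m _ _ (by simp [hq0, hq1])]
          simp [Fin.cons_succ]
      have hτIcc : ∀ q : (Fin (m+3) → Z) × (Fin (m+3) → ℝ), q ∈ D →
          (if 0 < q.2 0 + q.2 1 then q.2 1 / (q.2 0 + q.2 1) else 0) ∈ Icc (0:ℝ) 1 := by
        intro q hq
        by_cases hqO : 0 < q.2 0 + q.2 1
        · rw [if_pos hqO]
          constructor
          · exact div_nonneg (hq.2.1 1) hqO.le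
          · rw [div_le_one hqO]; linarith [hq.2.1 0]
        · rw [if_neg hqO]; exact ⟨le_refl 0, zero_le_one⟩
      -- now the tube argument
      have hfp : lambdaIter lam (m+2) p.1 p.2 = Const := by
        rw [hval p hp, ← hTconst (if 0 < p.2 0 + p.2 1 then p.2 1 / (p.2 0 + p.2 1) else 0)]
      rw [ContinuousWithinAt]
      show Tendsto _ _ (𝓝 (lambdaIter lam (m+2) p.1 p.2))
      rw [hfp]
      intro U hU
      -- for each t ∈ Icc, find nbhds
      have key : ∀ t ∈ Icc (0:ℝ) 1, ∃ W ∈ 𝓝 p, ∃ Ot ∈ 𝓝 t,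
          ∀ q ∈ (W ×ˢ Ot) ∩ (D ×ˢ Icc (0:ℝ) 1), T q ∈ U := by
        intro t ht
        have hcw : ContinuousWithinAt T (D ×ˢ Icc (0:ℝ) 1) (p, t) := hT (p, t) ⟨hp, ht⟩
        have : T ⁻¹' U ∈ 𝓝[D ×ˢ Icc (0:ℝ) 1] (p, t) := by
          apply hcw
          rw [hTconst t]
          exact hU
        rw [mem_nhdsWithin] at this
        obtain ⟨V, hVopen, hVmem, hVsub⟩ := this
        rw [isOpen_prod_iff] at hVopen
        obtain ⟨W, Ot, hWopen, hOtopen, hpW, htOt, hsub⟩ := hVopen p t hVmem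
        refine ⟨W, hWopen.mem_nhds hpW, Ot, hOtopen.mem_nhds htOt, ?_⟩
        rintro q ⟨hq1, hq2⟩
        exact hVsub ⟨hsub ⟨hq1.1, hq1.2⟩, hq2⟩
      choose! W hW Ot hOt hprop using key
      obtain ⟨s, hs, hcover⟩ := (isCompact_Icc (a := (0:ℝ)) (b := 1)).elim_nhds_subcover Ot
        (fun t ht => hOt t ht)
      have hWmem : (⋂ t ∈ s, W t) ∈ 𝓝 p := (Filter.biInter_mem s.finite_toSet).2
        (fun t ht => hW t (hs t ht))
      apply Filter.mem_of_superset (Filter.inter_mem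
        (nhdsWithin_le_nhds hWmem) self_mem_nhdsWithin)
      rintro q ⟨hqW, hqD⟩
      set τ : ℝ := if 0 < q.2 0 + q.2 1 then q.2 1 / (q.2 0 + q.2 1) else 0 with hτ
      have hτmem : τ ∈ Icc (0:ℝ) 1 := hτIcc q hqD
      obtain ⟨t, hts, htτ⟩ := Set.mem_iUnion₂.1 (hcover hτmem)
      show lambdaIter lam (m+2) q.1 q.2 ∈ U
      rw [hval q hqD]
      exact hprop t (hs t hts) (q, τ) ⟨⟨Set.mem_iInter₂.1 hqW t hts, htτ⟩, hqD, hτmem⟩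

theorem lambdaIter_enum (hzero : ∀ x y : Z, lam x y 0 = x) (hone : ∀ x y : Z, lam x y 1 = y) :
    ∀ (N : ℕ) (x : Fin (N+1) → Z) (a : Fin (N+1) → ℝ), (∀ i, 0 ≤ a i) → (∑ i, a i = 1) →
    ∀ (k : ℕ) (u : Fin (k+1) → Fin (N+1)), StrictMono u → (∀ m, a (u m) ≠ 0) →
    (∀ p, a p ≠ 0 → ∃ m, u m = p) →
    lambdaIter lam N x a = lambdaIter lam k (x ∘ u) (a ∘ u) := by
  intro N
  induction N with
  | zero =>
    intro x a _ _ k u hu _ _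
    have hk : k = 0 := by
      have := Fintype.card_le_of_injective u hu.injective
      simpa using this
    subst hk
    have h0 : u 0 = 0 := Fin.fin_one_eq_zero _
    simp [lambdaIter, Function.comp, h0]
  | succ N IH =>
    intro x a hnn hsum k u hu hnz hcov
    by_cases hsurj : Function.Surjective u
    · have hcard : k + 1 = N + 2 := by
        have := Fintype.card_of_bijective ⟨hu.injective, hsurj⟩
        simpa using this
      obtain rfl : k = N + 1 := by omega
      have hid : u = id := by
        have hr : range u = range (id : Fin (N+2) → Fin (N+2)) := by
          rw [Set.range_id, Set.range_eq_univ]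
          exact hsurj
        haveI : WellFoundedLT (Fin (N + 1 + 1)) :=
          Finite.to_wellFoundedLT
        exact (hu.range_inj strictMono_id).1 hr
      rw [hid]
      simp
    · rw [Function.Surjective] at hsurj
      push_neg at hsurj
      obtain ⟨p, hpm⟩ := hsurj
      have hap : a p = 0 := by
        by_contra h
        obtain ⟨m, hm⟩ := hcov p h
        exact hpm m hm
      rw [lambdaIter_removeNth lam hzero hone N x a hnn hsum p hap]
      choose u' hu' using fun m => Fin.exists_succAbove_eq (hpm m)
      have hu'sm : StrictMono u' := fun m m' h =>
        (Fin.strictMono_succAbove p).lt_iff_lt.1 (by rw [hu' m, hu' m']; exact hu h)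
      have hsum' : ∑ i, (a ∘ p.succAbove) i = 1 := by
        have := Fin.sum_univ_succAbove a p
        rw [hsum] at this
        simp only [comp_apply]
        rw [hap] at this
        linarith
      rw [IH (x ∘ p.succAbove) (a ∘ p.succAbove) (fun i => hnn _) hsum' k u' hu'sm
        (fun m => by rw [comp_apply, hu' m]; exact hnz m)
        (fun q hq => by
          obtain ⟨m, hm⟩ := hcov (p.succAbove q) hq
          exact ⟨m, (Fin.strictMono_succAbove p).injective (by rw [hu' m, hm])⟩)]
      congr 1 <;> funext m <;> simp [Function.comp, hu' m]


end Aux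

/-- If `(Z, λ)` is an equiconnected space, `(I, ≤)` a well-ordered set,
`(f_i)` a family of Baire-one maps `Y → Z` and `(φ_i)` a locally finite partition of unity
on `X`, then `f(x,y) = Σ^λ_{i∈I} φ_i(x) f_i(y)` is Baire-one.  The λ-sum is encoded by the
hypothesis `hf`: whenever `j : Fin (k+1) → I` is the increasing enumeration of the (finite,
nonempty) support `{i | φ_i(x) ≠ 0}`, then
`f(x,y) = λ_{k+1}(f_{j 0}(y),…,f_{j k}(y), φ_{j 0}(x),…,φ_{j k}(x))`. -/
theorem baireOne_lambdaSum_of_partitionOfUnity {X Y Z I : Type*} [TopologicalSpace X]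
    [TopologicalSpace Y] [TopologicalSpace Z] [LinearOrder I] [WellFoundedLT I]
    (lam : Z → Z → ℝ → Z) (hlam : IsEquiconnecting lam)
    (g : I → Y → Z) (hg : ∀ i, BaireOne (g i))
    (φ : I → X → ℝ) (hφ : IsLocFinPartitionOfUnity φ)
    (f : X × Y → Z)
    (hf : ∀ (x : X) (y : Y) (k : ℕ) (j : Fin (k + 1) → I), StrictMono j →
      (∀ m, φ (j m) x ≠ 0) → (∀ i, φ i x ≠ 0 → ∃ m, j m = i) →
      f (x, y) = lambdaIter lam k (fun m => g (j m) y) fun m => φ (j m) x) :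
    BaireOne f := by
  classical
  choose h hcont hlim using hg
  obtain ⟨hφc, hφ01, hφlf, hφsum⟩ := hφ
  have hfin : ∀ x : X, {i : I | φ i x ≠ 0}.Finite := fun x =>
    (hφlf.point_finite x).subset fun i hi => subset_closure hi
  have hne : ∀ x : X, {i : I | φ i x ≠ 0}.Nonempty := by
    intro x
    by_contra hemp
    rw [Set.not_nonempty_iff_eq_empty] at hemp
    have hz : ∀ i, φ i x = 0 := by
      intro i
      by_contra hzi
      exact absurd (Set.eq_empty_iff_forall_notMem.1 hemp i) (fun hh => hh hzi)
    have : ∑ᶠ i, φ i x = 0 := by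
      apply finsum_eq_zero_of_forall_eq_zero
      exact hz
    rw [hφsum x] at this
    norm_num at this
  have henum := fun x : X => exists_strictMono_enum (hfin x) (hne x)
  choose k j hjmono hjnz hjcov using henum
  simp only [Set.mem_setOf_eq] at hjnz hjcov
  -- sum over the canonical enumeration is 1
  have hsum_of : ∀ (x : X) (M : ℕ) (e : Fin (M + 1) → I), StrictMono e →
      (∀ i, φ i x ≠ 0 → ∃ m, e m = i) → ∑ m, φ (e m) x = 1 := by
    intro x M e hemono hecov
    have hsupp : Function.support (fun i => φ i x) ⊆ ↑(Finset.image e Finset.univ) := by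
      intro i hi
      obtain ⟨m, hm⟩ := hecov i hi
      simp only [Finset.coe_image, Set.mem_image, Finset.mem_coe, Finset.coe_univ]
      exact ⟨m, trivial, hm⟩
    have h1 : ∑ᶠ i, φ i x = ∑ i ∈ Finset.image e Finset.univ, φ i x :=
      finsum_eq_sum_of_support_subset _ hsupp
    rw [Finset.sum_image (fun m _ m' _ hmm => hemono.injective hmm)] at h1
    rw [← h1, hφsum x]
  have hjsum : ∀ x, ∑ m, φ (j x m) x = 1 := fun x =>
    hsum_of x (k x) (j x) (hjmono x) (hjcov x)
  set F : ℕ → X × Y → Z := fun n p =>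
    lambdaIter lam (k p.1) (fun m => h (j p.1 m) n p.2) (fun m => φ (j p.1 m) p.1) with hF
  refine ⟨F, ?_, ?_⟩
  · -- continuity of each F n
    intro n
    rw [continuous_iff_continuousAt]
    rintro ⟨x0, y0⟩
    obtain ⟨U, hU, hUfin⟩ := hφlf x0
    obtain ⟨V, hVU, hVopen, hxV⟩ := mem_nhds_iff.1 hU
    set s0 : Set I := {i | (closure (Function.support (φ i)) ∩ U).Nonempty} with hs0
    have hsub : ∀ x ∈ V, ∀ i : I, φ i x ≠ 0 → i ∈ s0 := fun x hx i hi =>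
      ⟨x, subset_closure hi, hVU hx⟩
    have hs0ne : s0.Nonempty := by
      obtain ⟨i, hi⟩ := hne x0
      exact ⟨i, hsub x0 hxV i hi⟩
    obtain ⟨N, e, hemono, hes, hecov⟩ := exists_strictMono_enum hUfin hs0ne
    have hessum : ∀ x ∈ V, ∑ m, φ (e m) x = 1 := by
      intro x hx
      apply hsum_of x N e hemono
      intro i hi
      exact hecov i (hsub x hx i hi)
    set G : X × Y → Z := fun p =>
      lambdaIter lam N (fun m => h (e m) n p.2) (fun m => φ (e m) p.1) with hG
    have hGcont : ContinuousOn G (V ×ˢ (Set.univ : Set Y)) := by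
      have hinner : Continuous fun p : X × Y =>
          (((fun m => h (e m) n p.2) : Fin (N+1) → Z),
           ((fun m => φ (e m) p.1) : Fin (N+1) → ℝ)) := by
        apply Continuous.prodMk
        · exact continuous_pi fun m => (hcont (e m) n).comp continuous_snd
        · exact continuous_pi fun m => (hφc (e m)).comp continuous_fst
      apply (continuousOn_lambdaIter lam hlam.continuousOn hlam.map_one N).comp
        hinner.continuousOn
      rintro ⟨x, y⟩ ⟨hx, -⟩
      exact ⟨trivial, fun m => (hφ01 (e m) x).1, hessum x hx⟩
    have hcongr : ∀ p ∈ V ×ˢ (Set.univ : Set Y), F n p = G p := by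
      rintro ⟨x, y⟩ ⟨hx, -⟩
      have hjs0 : ∀ m, j x m ∈ s0 := fun m => hsub x hx _ (hjnz x m)
      choose u hu using fun m => hecov (j x m) (hjs0 m)
      have humono : StrictMono u := by
        intro m m' hmm
        have : e (u m) < e (u m') := by rw [hu m, hu m']; exact hjmono x hmm
        exact hemono.lt_iff_lt.1 this
      have := lambdaIter_enum lam hlam.map_zero hlam.map_one N
        (fun m => h (e m) n y) (fun m => φ (e m) x)
        (fun m => (hφ01 (e m) x).1) (hessum x hx) (k x) u humono
        (fun m => by simp only [comp_apply, hu m]; exact hjnz x m)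
        (fun q hq => by
          obtain ⟨m, hm⟩ := hjcov x (e q) hq
          exact ⟨m, hemono.injective (by rw [hu m, hm])⟩)
      show F n (x, y) = G (x, y)
      rw [hG]
      simp only
      rw [this]
      show lambdaIter lam (k x) (fun m => h (j x m) n y) (fun m => φ (j x m) x) = _
      congr 1
      · funext m
        simp only [comp_apply, hu m]
      · funext m
        simp only [comp_apply, hu m]
    have hmemnhds : V ×ˢ (Set.univ : Set Y) ∈ 𝓝 (x0, y0) :=
      prod_mem_nhds (hVopen.mem_nhds hxV) Filter.univ_mem
    exact ((hGcont.congr hcongr).continuousAt hmemnhds)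
  · -- pointwise convergence
    rintro ⟨x, y⟩
    have hfx : f (x, y)
        = lambdaIter lam (k x) (fun m => g (j x m) y) (fun m => φ (j x m) x) :=
      hf x y (k x) (j x) (hjmono x) (hjnz x) (hjcov x)
    rw [hfx]
    have hB : Continuous fun z : Fin (k x + 1) → Z =>
        lambdaIter lam (k x) z (fun m => φ (j x m) x) := by
      apply (continuousOn_lambdaIter lam hlam.continuousOn hlam.map_one (k x)).comp_continuous
        (continuous_id.prodMk continuous_const)
      exact fun z => ⟨trivial, fun m => (hφ01 (j x m) x).1, hjsum x⟩
    have htup : Filter.Tendsto (fun n => (fun m => h (j x m) n y : Fin (k x + 1) → Z))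
        Filter.atTop (𝓝 (fun m => g (j x m) y)) :=
      tendsto_pi_nhds.2 fun m => hlim (j x m) y
    exact (hB.tendsto _).comp htup
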